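/- Let χ ≥ 1, N ≥ 1 and n be an integer. Suppose there exist invertible matrices v_q, v_{d,0}, v_{d,1} ∈ Matrix (Fin χ) (Fin χ) ℂ, a nonzero scalar c ∈ ℂ, and scalars μ₀, μ₁ ∈ ℂ such that v_{d,1} = c • (v_{d,0} * v_q), v_q * v_{d,0} = μ₀ • (v_{d,0} * v_q), v_q * v_{d,1} = μ₁ • (v_{d,1} * v_q), and μ₁ = exp(2πi·n/N)·μ₀. Then N ∣ n. (Hence for dipole symmetry with nontrivial on-site projective class n ≢ 0 (mod N), no symmetric injective MPS exists: the dipole LSM theorem.) -/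

import Mathlib

/-- Dipole LSM theorem: if bond unitaries implement the dipole push-through structure
`v_{d,1} ≐ v_{d,0} v_q` with commutator phases `μ₀, μ₁` satisfying the physical–virtual
matching `μ₁ = exp(2πin/N)·μ₀`, then `N ∣ n`; hence for a nontrivial on-site projective
class no symmetric injective MPS exists. -/
theorem dipole_LSM (χ N : ℕ) (hχ : 1 ≤ χ) (hN : 1 ≤ N) (n : ℤ)
    (vq vd0 vd1 : Matrix (Fin χ) (Fin χ) ℂ)
    (hq : IsUnit vq) (hd0 : IsUnit vd0) (hd1 : IsUnit vd1)
    (c : ℂ) (hc : c ≠ 0) (μ0 μ1 : ℂ)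
    (h1 : vd1 = c • (vd0 * vq))
    (h2 : vq * vd0 = μ0 • (vd0 * vq))
    (h3 : vq * vd1 = μ1 • (vd1 * vq))
    (h4 : μ1 = Complex.exp (2 * Real.pi * Complex.I * (n : ℂ) / (N : ℂ)) * μ0) :
    (N : ℤ) ∣ n := by
  haveI : Nonempty (Fin χ) := ⟨⟨0, hχ⟩⟩
  have hNonempty : Nontrivial (Matrix (Fin χ) (Fin χ) ℂ) := inferInstance
  -- X = vd0 * vq * vq is invertible, hence nonzero
  have hXunit : IsUnit (vd0 * vq * vq) := (hd0.mul hq).mul hq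
  have hX : vd0 * vq * vq ≠ 0 := by
    intro h
    obtain ⟨u, hu⟩ := hXunit
    have : (1 : Matrix (Fin χ) (Fin χ) ℂ) = 0 := by
      have h1' : (u : Matrix (Fin χ) (Fin χ) ℂ) * (u⁻¹ : (Matrix (Fin χ) (Fin χ) ℂ)ˣ) = 1 :=
        u.mul_inv
      rw [hu, h] at h1'
      simpa using h1'.symm
    exact one_ne_zero this
  -- compute vq * vd1 two ways
  have key : (c * μ0) • (vd0 * vq * vq) = (μ1 * c) • (vd0 * vq * vq) := by
    have lhs : vq * vd1 = (c * μ0) • (vd0 * vq * vq) := by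
      rw [h1, Matrix.mul_smul, ← mul_assoc, h2]
      rw [Matrix.smul_mul, smul_smul, mul_assoc]
    have rhs : vq * vd1 = (μ1 * c) • (vd0 * vq * vq) := by
      rw [h3, h1, Matrix.smul_mul, smul_smul, mul_assoc]
    rw [← lhs, rhs]
  have hscal : c * μ0 = μ1 * c := by
    by_contra hne
    have := sub_smul (c * μ0) (μ1 * c) (vd0 * vq * vq)
    rw [key, sub_self] at this
    rcases smul_eq_zero.mp this with h | h
    · exact hne (sub_eq_zero.mp h)
    · exact hX h
  have hμeq : μ0 = μ1 := by
    have := mul_left_cancel₀ hc (by rw [hscal, mul_comm] : c * μ0 = c * μ1)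
    exact this
  -- μ0 ≠ 0 since vq * vd0 is a unit
  have hμ0 : μ0 ≠ 0 := by
    intro h
    have hu : IsUnit (vq * vd0) := hq.mul hd0
    rw [h2, h, zero_smul] at hu
    obtain ⟨u, hu⟩ := hu
    have h1' : (u : Matrix (Fin χ) (Fin χ) ℂ) * (u⁻¹ : (Matrix (Fin χ) (Fin χ) ℂ)ˣ) = 1 :=
      u.mul_inv
    rw [hu] at h1'
    simp at h1'
  have hexp : Complex.exp (2 * Real.pi * Complex.I * (n : ℂ) / (N : ℂ)) = 1 := by
    have h5 : Complex.exp (2 * Real.pi * Complex.I * (n : ℂ) / (N : ℂ)) * μ0 = 1 * μ0 := by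
      rw [one_mul, ← h4, hμeq]
    exact mul_right_cancel₀ hμ0 h5
  rw [Complex.exp_eq_one_iff] at hexp
  obtain ⟨k, hk⟩ := hexp
  have hNne : (N : ℂ) ≠ 0 := Nat.cast_ne_zero.mpr (by omega)
  have hpi : (2 * Real.pi * Complex.I : ℂ) ≠ 0 := by
    simp [Real.pi_ne_zero, Complex.I_ne_zero]
  have : (n : ℂ) = (k : ℂ) * (N : ℂ) := by
    field_simp at hk
    have := mul_right_cancel₀ hpi (by linear_combination (2 * Real.pi * Complex.I) * hk : (n : ℂ) * (2 * Real.pi * Complex.I) = ((k : ℂ) * (N : ℂ)) * (2 * Real.pi * Complex.I))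
    exact this
  have hn : n = k * (N : ℤ) := by exact_mod_cast this
  exact ⟨k, by rw [hn, mul_comm]⟩
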